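/- For the lens space L(p,q) and the spin^c structure indexed by 0 ≤ a < p, one has χ(l'_{[-a g_s]}) = a(1-p)/(2p) + Σ_{j=1}^{a} {j q'/p}, where q q' ≡ 1 (mod p), 0 < q' < p. -/

import Mathlib

section Part1
variable {s : ℤ} {k : ℤ → ℤ} {n : ℤ → ℤ → ℤ}

/-- diagonal value -/
private lemma n_diag (hn1 : ∀ i, n i (i - 1) = 1) (hn0 : ∀ i j, j < i - 1 → n i j = 0)
    (hrec : ∀ i j, i ≤ j → j ≤ s → n i j = k i * n (i + 1) j - n (i + 2) j)
    {i : ℤ} (h1 : i ≤ s) : n i i = k i := by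
  have h := hrec i i le_rfl h1
  have e1 : n (i+1) i = 1 := by have := hn1 (i+1); simpa using this
  have e2 : n (i+2) i = 0 := hn0 (i+2) i (by omega)
  rw [h, e1, e2]; ring

/-- second-index recursion -/
private lemma nrec2 (hn1 : ∀ i, n i (i - 1) = 1) (hn0 : ∀ i j, j < i - 1 → n i j = 0)
    (hrec : ∀ i j, i ≤ j → j ≤ s → n i j = k i * n (i + 1) j - n (i + 2) j) :
    ∀ i j : ℤ, i ≤ j → j ≤ s → n i j = k j * n i (j-1) - n i (j-2) := by
  have key : ∀ d : ℕ, ∀ i j : ℤ, (j - i).toNat = d → i ≤ j → j ≤ s →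
      n i j = k j * n i (j-1) - n i (j-2) := by
    intro d
    induction d using Nat.strong_induction_on with
    | _ d ih =>
      intro i j hd hij hjs
      rcases eq_or_lt_of_le hij with h0 | h1
      · -- j = i
        subst h0
        have e1 : n i (i-1) = 1 := hn1 i
        have e2 : n i (i-2) = 0 := hn0 i (i-2) (by omega)
        rw [e1, e2, n_diag hn1 hn0 hrec hjs]; ring
      rcases eq_or_lt_of_le (by omega : i + 1 ≤ j) with h0 | h2
      · -- j = i + 1
        have hj : j = i + 1 := h0.symm
        subst hj
        have e0 : n i (i+1) = k i * n (i+1) (i+1) - n (i+2) (i+1) := hrec i (i+1) (by omega) hjs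
        have e1 : n (i+1) (i+1) = k (i+1) := n_diag hn1 hn0 hrec hjs
        have e2 : n (i+2) (i+1) = 1 := by
          have := hn1 (i+2); rw [show (i+2-1 : ℤ) = i+1 by ring] at this; exact this
        have e3 : n i (i+1-1) = k i := by simpa using n_diag hn1 hn0 hrec (by omega : i ≤ s)
        have e4 : n i (i+1-2) = 1 := by
          rw [show (i+1-2 : ℤ) = i - 1 by ring]; exact hn1 i
        rw [e0, e1, e2, e3, e4]; ring
      · -- j ≥ i + 2
        have r1 : n i j = k i * n (i+1) j - n (i+2) j := hrec i j hij hjs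
        have r2 : n (i+1) j = k j * n (i+1) (j-1) - n (i+1) (j-2) :=
          ih (j - (i+1)).toNat (by omega) (i+1) j rfl (by omega) hjs
        have r3 : n (i+2) j = k j * n (i+2) (j-1) - n (i+2) (j-2) :=
          ih (j - (i+2)).toNat (by omega) (i+2) j rfl (by omega) hjs
        have r4 : n i (j-1) = k i * n (i+1) (j-1) - n (i+2) (j-1) := hrec i (j-1) (by omega) (by omega)
        have r5 : n i (j-2) = k i * n (i+1) (j-2) - n (i+2) (j-2) := hrec i (j-2) (by omega) (by omega)
        rw [r1, r2, r3, r4, r5]; ring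
  intro i j hij hjs
  exact key (j - i).toNat i j rfl hij hjs

/-- positivity / monotonicity of `n 1 ·` -/
private lemma n1_pos (hs : 1 ≤ s) (hk : ∀ i, 1 ≤ i → i ≤ s → 2 ≤ k i)
    (hn1 : ∀ i, n i (i - 1) = 1) (hn0 : ∀ i j, j < i - 1 → n i j = 0)
    (hrec : ∀ i j, i ≤ j → j ≤ s → n i j = k i * n (i + 1) j - n (i + 2) j) :
    ∀ j : ℤ, 0 ≤ j → j ≤ s → 1 ≤ n 1 j ∧ n 1 (j-1) ≤ n 1 j := by
  have key : ∀ d : ℕ, ∀ j : ℤ, j.toNat = d → 0 ≤ j → j ≤ s → 1 ≤ n 1 j ∧ n 1 (j-1) ≤ n 1 j := by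
    intro d
    induction d using Nat.strong_induction_on with
    | _ d ih =>
      intro j hd h0 hjs
      rcases eq_or_lt_of_le h0 with h | h
      · subst h
        have e1 : n 1 (0:ℤ) = 1 := by have := hn1 1; simpa using this
        have e2 : n 1 (0-1:ℤ) = 0 := by
          rw [show ((0:ℤ)-1) = -1 by ring]; exact hn0 1 (-1) (by omega)
        constructor
        · simp [e1]
        · rw [e1, e2]; norm_num
      · -- j ≥ 1
        have hprev := ih (j-1).toNat (by omega) (j-1) rfl (by omega) (by omega)
        have hrec2 : n 1 j = k j * n 1 (j-1) - n 1 (j-2) := nrec2 hn1 hn0 hrec 1 j (by omega) hjs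
        have hkj : 2 ≤ k j := hk j (by omega) hjs
        have h1 : 1 ≤ n 1 (j-1) := hprev.1
        have h2 : n 1 (j-1-1) ≤ n 1 (j-1) := hprev.2
        have h2' : n 1 (j-2) ≤ n 1 (j-1) := by simpa [show j-1-1 = j-2 by ring] using h2
        have : n 1 (j-1) ≤ n 1 j := by nlinarith
        exact ⟨by omega, this⟩
  intro j h0 hjs; exact key j.toNat j rfl h0 hjs

/-- key congruence identity: n 1 (t-1) = q' * n (t+1) s - p * n (t+1) (s-1) -/
private lemma ncong (hs : 1 ≤ s)
    (hn1 : ∀ i, n i (i - 1) = 1) (hn0 : ∀ i j, j < i - 1 → n i j = 0)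
    (hrec : ∀ i j, i ≤ j → j ≤ s → n i j = k i * n (i + 1) j - n (i + 2) j) :
    ∀ t : ℤ, 0 ≤ t → t ≤ s →
      n 1 (t-1) = n 1 (s-1) * n (t+1) s - n 1 s * n (t+1) (s-1) := by
  have key : ∀ d : ℕ, ∀ t : ℤ, (s - t).toNat = d → 0 ≤ t → t ≤ s →
      n 1 (t-1) = n 1 (s-1) * n (t+1) s - n 1 s * n (t+1) (s-1) := by
    intro d
    induction d using Nat.strong_induction_on with
    | _ d ih =>
      intro t hd h0 hts
      rcases eq_or_lt_of_le hts with h | h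
      · -- t = s
        subst h
        have e1 : n (t+1) t = 1 := by have := hn1 (t+1); simpa using this
        have e2 : n (t+1) (t-1) = 0 := hn0 (t+1) (t-1) (by omega)
        rw [e1, e2]; ring
      rcases eq_or_lt_of_le (by omega : t ≤ s - 1) with h1 | h2
      · -- t = s - 1
        subst h1
        have e1 : n (s-1+1) s = k s := by
          have := n_diag (i := s) hn1 hn0 hrec le_rfl; simpa using this
        have e2 : n (s-1+1) (s-1) = 1 := by have := hn1 s; simpa using this
        have e3 : n 1 s = k s * n 1 (s-1) - n 1 (s-2) := nrec2 hn1 hn0 hrec 1 s hs le_rfl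
        rw [e1, e2]
        rw [show s - 1 - 1 = s - 2 by ring]
        linear_combination e3
      · -- t ≤ s - 2
        have i1 := ih (s - (t+1)).toNat (by omega) (t+1) rfl (by omega) (by omega)
        have i2 := ih (s - (t+2)).toNat (by omega) (t+2) rfl (by omega) (by omega)
        -- n 1 (t+1) = k (t+1) * n 1 t - n 1 (t-1)
        have r1 : n 1 (t+1) = k (t+1) * n 1 (t+1-1) - n 1 (t+1-2) :=
          nrec2 hn1 hn0 hrec 1 (t+1) (by omega) (by omega)
        have r2 : n (t+1) s = k (t+1) * n (t+2) s - n (t+3) s := by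
          have := hrec (t+1) s (by omega) le_rfl
          simpa [show t+1+1 = t+2 by ring, show t+1+2 = t+3 by ring] using this
        have r3 : n (t+1) (s-1) = k (t+1) * n (t+2) (s-1) - n (t+3) (s-1) := by
          have := hrec (t+1) (s-1) (by omega) (by omega)
          simpa [show t+1+1 = t+2 by ring, show t+1+2 = t+3 by ring] using this
        have i1' : n 1 t = n 1 (s-1) * n (t+2) s - n 1 s * n (t+2) (s-1) := by
          rw [show (t+1-1:ℤ) = t by ring, show (t+1+1:ℤ) = t+2 by ring] at i1; exact i1
        have i2' : n 1 (t+1) = n 1 (s-1) * n (t+3) s - n 1 s * n (t+3) (s-1) := by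
          rw [show (t+2-1:ℤ) = t+1 by ring, show (t+2+1:ℤ) = t+3 by ring] at i2; exact i2
        have r1' : n 1 (t+1) = k (t+1) * n 1 t - n 1 (t-1) := by
          simpa [show t+1-1 = t by ring, show t+1-2 = t-1 by ring] using r1
        rw [r2, r3]
        linear_combination r1' + k (t+1) * i1' - i2'
  intro t h0 hts; exact key (s - t).toNat t rfl h0 hts

end Part1


section Part2
variable {s : ℤ} {k : ℤ → ℤ} {n : ℤ → ℤ → ℤ}

private def Cz (k : ℤ → ℤ) (v : ℤ → ℚ) (j : ℤ) : ℚ := v (j-1) + v (j+1) - (k j : ℚ) * v j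

private def Vanish (s : ℤ) (v : ℤ → ℚ) : Prop := ∀ t : ℤ, ¬(1 ≤ t ∧ t ≤ s) → v t = 0

private def Gs (s : ℤ) (n : ℤ → ℤ → ℤ) (t : ℤ) : ℚ :=
  if 1 ≤ t ∧ t ≤ s then -((n 1 (t-1) : ℚ)) / ((n 1 s : ℚ)) else 0

private noncomputable def ExtQ (s : ℤ) (f : ↥(Finset.Icc (1:ℤ) s) → ℚ) (t : ℤ) : ℚ :=
  if h : t ∈ Finset.Icc (1:ℤ) s then f ⟨t, h⟩ else 0

private lemma ExtQ_coe (f : ↥(Finset.Icc (1:ℤ) s) → ℚ) (i : ↥(Finset.Icc (1:ℤ) s)) :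
    ExtQ s f (i : ℤ) = f i := by
  unfold ExtQ
  rw [dif_pos i.2]

private lemma ExtQ_vanish (f : ↥(Finset.Icc (1:ℤ) s) → ℚ) : Vanish s (ExtQ s f) := by
  intro t ht
  unfold ExtQ
  rw [dif_neg]
  simpa [Finset.mem_Icc] using ht

private lemma Gs_vanish : Vanish s (Gs s n) := by
  intro t ht; simp only [Gs, if_neg ht]

private lemma Gs_eq (hn0 : ∀ i j, j < i - 1 → n i j = 0) {t : ℤ} (h0 : 0 ≤ t) (hts : t ≤ s) :
    Gs s n t = -((n 1 (t-1) : ℚ)) / ((n 1 s : ℚ)) := by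
  rcases eq_or_lt_of_le h0 with h | h
  · subst h
    have h1 : n 1 (-1 : ℤ) = 0 := hn0 1 (-1) (by omega)
    simp [Gs, h1]
  · rw [Gs, if_pos ⟨by omega, hts⟩]

private lemma sum_Icc_top {a b : ℤ} (h : a ≤ b) (f : ℤ → ℚ) :
    ∑ j ∈ Finset.Icc a b, f j = (∑ j ∈ Finset.Icc a (b-1), f j) + f b := by
  have e : Finset.Icc a b = insert b (Finset.Icc a (b-1)) := by
    ext t; simp only [Finset.mem_Icc, Finset.mem_insert]; omega
  rw [e, Finset.sum_insert (by simp only [Finset.mem_Icc]; omega)]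
  ring

private lemma sum_Icc_bot {a b : ℤ} (h : a ≤ b) (f : ℤ → ℚ) :
    ∑ j ∈ Finset.Icc a b, f j = f a + ∑ j ∈ Finset.Icc (a+1) b, f j := by
  have e : Finset.Icc a b = insert a (Finset.Icc (a+1) b) := by
    ext t; simp only [Finset.mem_Icc, Finset.mem_insert]; omega
  rw [e, Finset.sum_insert (by simp only [Finset.mem_Icc]; omega)]

/-- telescoping -/
private lemma sum_tele (f : ℤ → ℚ) {a b : ℤ} (hb : a - 1 ≤ b) :
    ∑ j ∈ Finset.Icc a b, (f j - f (j-1)) = f b - f (a-1) := by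
  refine Int.le_induction (motive := fun b _ => ∑ j ∈ Finset.Icc a b, (f j - f (j-1)) = f b - f (a-1)) ?_ ?_ b hb
  · show ∑ j ∈ Finset.Icc a (a-1), (f j - f (j-1)) = f (a-1) - f (a-1)
    rw [Finset.Icc_eq_empty (by omega)]
    simp
  · intro b hb ih
    show ∑ j ∈ Finset.Icc a (b+1), (f j - f (j-1)) = f (b+1) - f (a-1)
    rw [sum_Icc_top (by omega), show b + 1 - 1 = b by ring, ih]
    ring

private lemma sum_shiftA (hs : 1 ≤ s) (x y : ℤ → ℚ) (hx : Vanish s x) (hy : Vanish s y) :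
    ∑ j ∈ Finset.Icc 1 s, x j * y (j-1) = ∑ j ∈ Finset.Icc 1 s, y j * x (j+1) := by
  have h1 : ∑ j ∈ Finset.Icc 1 s, x j * y (j-1)
      = ∑ t ∈ Finset.Icc 0 (s-1), x (t+1) * y t := by
    have hmap : Finset.Icc (1:ℤ) s = (Finset.Icc (0:ℤ) (s-1)).map (addRightEmbedding 1) := by
      rw [Finset.map_add_right_Icc]; norm_num
    rw [hmap, Finset.sum_map]
    apply Finset.sum_congr rfl
    intro t _
    have e : addRightEmbedding (1:ℤ) t = t + 1 := rfl
    rw [e, show t + 1 - 1 = t by ring]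
  have h2 : Finset.Icc (0:ℤ) (s-1) = insert 0 (Finset.Icc 1 (s-1)) := by
    ext t; simp [Finset.mem_Icc]; omega
  have h3 : ∑ j ∈ Finset.Icc 1 s, y j * x (j+1)
      = (∑ t ∈ Finset.Icc 1 (s-1), y t * x (t+1)) + y s * x (s+1) := by
    exact sum_Icc_top hs (fun j => y j * x (j+1))
  rw [h1, h2, Finset.sum_insert (by simp only [Finset.mem_Icc]; omega), h3]
  rw [hy 0 (by omega), hx (s+1) (by omega)]
  simp only [mul_zero, zero_mul, zero_add, add_zero]
  apply Finset.sum_congr rfl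
  intro t _; ring

private lemma sum_shiftB (hs : 1 ≤ s) (x y : ℤ → ℚ) (hx : Vanish s x) (hy : Vanish s y) :
    ∑ j ∈ Finset.Icc 1 s, x j * y (j+1) = ∑ j ∈ Finset.Icc 1 s, y j * x (j-1) :=
  (sum_shiftA hs y x hy hx).symm

private lemma sum_expand (x w : ℤ → ℚ) :
    ∑ j ∈ Finset.Icc 1 s, x j * Cz k w j
      = ∑ j ∈ Finset.Icc 1 s, x j * w (j-1) + ∑ j ∈ Finset.Icc 1 s, x j * w (j+1)
        - ∑ j ∈ Finset.Icc 1 s, (k j : ℚ) * (x j * w j) := by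
  rw [← Finset.sum_add_distrib, ← Finset.sum_sub_distrib]
  apply Finset.sum_congr rfl
  intro t _; simp only [Cz]; ring

private lemma sum_symm (hs : 1 ≤ s) (x y : ℤ → ℚ) (hx : Vanish s x) (hy : Vanish s y) :
    ∑ j ∈ Finset.Icc 1 s, x j * Cz k y j = ∑ j ∈ Finset.Icc 1 s, y j * Cz k x j := by
  rw [sum_expand, sum_expand, sum_shiftA hs x y hx hy, sum_shiftB hs x y hx hy]
  have e3 : ∑ j ∈ Finset.Icc 1 s, (k j : ℚ) * (x j * y j)
      = ∑ j ∈ Finset.Icc 1 s, (k j : ℚ) * (y j * x j) := by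
    apply Finset.sum_congr rfl; intro t _; ring
  rw [e3]; ring

private lemma sum_dirac (hs : 1 ≤ s) (x : ℤ → ℚ) :
    ∑ j ∈ Finset.Icc 1 s, x j * (if j = s then (1:ℚ) else 0) = x s := by
  simp only [mul_ite, mul_one, mul_zero]
  rw [Finset.sum_ite_eq' (Finset.Icc 1 s) s x]
  simp [Finset.mem_Icc, hs]

private lemma sum_extq_ite (f : ↥(Finset.Icc (1:ℤ) s) → ℚ) (c : ℤ) (v : ℚ) :
    ∑ t ∈ Finset.Icc (1:ℤ) s, ExtQ s f t * (if t = c then v else 0) = ExtQ s f c * v := by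
  simp only [mul_ite, mul_one, mul_zero]
  rw [Finset.sum_ite_eq' (Finset.Icc 1 s) c (fun t => ExtQ s f t * v)]
  by_cases hc : c ∈ Finset.Icc (1:ℤ) s
  · rw [if_pos hc]
  · rw [if_neg hc]
    have : ExtQ s f c = 0 := by
      apply ExtQ_vanish
      simpa [Finset.mem_Icc] using hc
    rw [this, zero_mul]

end Part2

section Part2b
variable {s : ℤ} {k : ℤ → ℤ} {n : ℤ → ℤ → ℤ}

private lemma np_pos (hs : 1 ≤ s) (hk : ∀ i, 1 ≤ i → i ≤ s → 2 ≤ k i)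
    (hn1 : ∀ i, n i (i - 1) = 1) (hn0 : ∀ i j, j < i - 1 → n i j = 0)
    (hrec : ∀ i j, i ≤ j → j ≤ s → n i j = k i * n (i + 1) j - n (i + 2) j) :
    (0:ℚ) < ((n 1 s : ℤ) : ℚ) := by
  have h := (n1_pos hs hk hn1 hn0 hrec s (by omega) le_rfl).1
  exact_mod_cast (by omega : (0:ℤ) < n 1 s)

private lemma Cz_Gs (hs : 1 ≤ s) (hk : ∀ i, 1 ≤ i → i ≤ s → 2 ≤ k i)
    (hn1 : ∀ i, n i (i - 1) = 1) (hn0 : ∀ i j, j < i - 1 → n i j = 0)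
    (hrec : ∀ i j, i ≤ j → j ≤ s → n i j = k i * n (i + 1) j - n (i + 2) j)
    {j : ℤ} (h1 : 1 ≤ j) (hjs : j ≤ s) :
    Cz k (Gs s n) j = if j = s then (1:ℚ) else 0 := by
  have hp : (0:ℚ) < ((n 1 s : ℤ) : ℚ) := np_pos hs hk hn1 hn0 hrec
  have hp' : ((n 1 s : ℤ) : ℚ) ≠ 0 := ne_of_gt hp
  have hrec2 : ((n 1 j : ℤ) : ℚ) = (k j : ℚ) * ((n 1 (j-1) : ℤ) : ℚ) - ((n 1 (j-2) : ℤ) : ℚ) := by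
    exact_mod_cast nrec2 hn1 hn0 hrec 1 j h1 hjs
  by_cases hj : j = s
  · rw [if_pos hj]
    unfold Cz
    rw [hj]
    rw [Gs_eq hn0 (by omega) (by omega), Gs_eq hn0 (by omega) le_rfl,
      Gs_vanish (s+1) (by omega), show s - 1 - 1 = s - 2 by ring]
    have hrecs : ((n 1 s : ℤ) : ℚ) = (k s : ℚ) * ((n 1 (s-1) : ℤ) : ℚ) - ((n 1 (s-2) : ℤ) : ℚ) := by
      exact_mod_cast nrec2 hn1 hn0 hrec 1 s hs le_rfl
    have e : -((n 1 (s-2) : ℤ):ℚ)/((n 1 s : ℤ):ℚ) + 0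
        - (k s:ℚ) * (-((n 1 (s-1) : ℤ):ℚ)/((n 1 s : ℤ):ℚ))
        = ((k s:ℚ) * ((n 1 (s-1) : ℤ):ℚ) - ((n 1 (s-2) : ℤ):ℚ)) / ((n 1 s : ℤ):ℚ) := by ring
    rw [e, ← hrecs, div_self hp']
  · rw [if_neg hj]
    unfold Cz
    rw [Gs_eq hn0 (by omega) (by omega), Gs_eq hn0 (by omega) (by omega),
      Gs_eq hn0 (by omega) (by omega), show j - 1 - 1 = j - 2 by ring,
      show j + 1 - 1 = j by ring]
    have e : -((n 1 (j-2) : ℤ):ℚ)/((n 1 s : ℤ):ℚ) + -((n 1 j : ℤ):ℚ)/((n 1 s : ℤ):ℚ)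
        - (k j:ℚ) * (-((n 1 (j-1) : ℤ):ℚ)/((n 1 s : ℤ):ℚ))
        = ((k j:ℚ) * ((n 1 (j-1) : ℤ):ℚ) - ((n 1 (j-2) : ℤ):ℚ) - ((n 1 j : ℤ):ℚ))
          / ((n 1 s : ℤ):ℚ) := by ring
    rw [e]
    rw [show (k j:ℚ) * ((n 1 (j-1) : ℤ):ℚ) - ((n 1 (j-2) : ℤ):ℚ) - ((n 1 j : ℤ):ℚ) = 0 by
      linear_combination -hrec2]
    exact zero_div _

private lemma Ksum (hs : 1 ≤ s) (hk : ∀ i, 1 ≤ i → i ≤ s → 2 ≤ k i)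
    (hn1 : ∀ i, n i (i - 1) = 1) (hn0 : ∀ i j, j < i - 1 → n i j = 0)
    (hrec : ∀ i j, i ≤ j → j ≤ s → n i j = k i * n (i + 1) j - n (i + 2) j) :
    ∑ j ∈ Finset.Icc 1 s, ((n 1 (j-1) : ℤ) : ℚ) * ((k j : ℚ) - 2)
      = ((n 1 s : ℤ) : ℚ) - ((n 1 (s-1) : ℤ) : ℚ) - 1 := by
  have h0 : ∑ j ∈ Finset.Icc 1 s, ((n 1 (j-1) : ℤ) : ℚ) * ((k j : ℚ) - 2)
      = ∑ j ∈ Finset.Icc 1 s,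
        ((fun t => ((n 1 t : ℤ) : ℚ) - ((n 1 (t-1) : ℤ) : ℚ)) j
          - (fun t => ((n 1 t : ℤ) : ℚ) - ((n 1 (t-1) : ℤ) : ℚ)) (j-1)) := by
    apply Finset.sum_congr rfl
    intro j hj
    rw [Finset.mem_Icc] at hj
    have hrec2 : ((n 1 j : ℤ) : ℚ) = (k j : ℚ) * ((n 1 (j-1) : ℤ) : ℚ) - ((n 1 (j-2) : ℤ) : ℚ) := by
      exact_mod_cast nrec2 hn1 hn0 hrec 1 j hj.1 hj.2
    simp only
    rw [show j - 1 - 1 = j - 2 by ring]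
    linear_combination -hrec2
  rw [h0, sum_tele _ (by omega)]
  have e1 : n 1 (0:ℤ) = 1 := by have := hn1 1; norm_num at this; exact this
  rw [show (1:ℤ)-1 = 0 by ring, show (0:ℤ)-1 = -1 by ring, e1, hn0 1 (-1) (by omega)]
  push_cast
  ring

private lemma kernel (hs : 1 ≤ s) (hk : ∀ i, 1 ≤ i → i ≤ s → 2 ≤ k i)
    (hn1 : ∀ i, n i (i - 1) = 1) (hn0 : ∀ i j, j < i - 1 → n i j = 0)
    (hrec : ∀ i j, i ≤ j → j ≤ s → n i j = k i * n (i + 1) j - n (i + 2) j)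
    (u : ℤ → ℚ) (hu0 : Vanish s u)
    (huc : ∀ j, 1 ≤ j → j ≤ s → Cz k u j = 0) : ∀ t, u t = 0 := by
  have claim : ∀ d : ℕ, ∀ t : ℤ, t.toNat = d → 0 ≤ t → t ≤ s →
      u t = ((n 1 (t-1) : ℤ) : ℚ) * u 1 := by
    intro d
    induction d using Nat.strong_induction_on with
    | _ d ih =>
      intro t hd h0 hts
      rcases eq_or_lt_of_le h0 with h | h
      · subst h
        have e2 : n 1 (0-1:ℤ) = 0 := by
          rw [show ((0:ℤ)-1) = -1 by ring]; exact hn0 1 (-1) (by omega)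
        rw [hu0 0 (by omega), e2]
        norm_num
      rcases eq_or_lt_of_le (by omega : 1 ≤ t) with h | h
      · rw [← h]
        have e1 : n 1 (1-1:ℤ) = 1 := hn1 1
        rw [e1]
        norm_num
      · -- t ≥ 2
        have hc := huc (t-1) (by omega) (by omega)
        unfold Cz at hc
        rw [show t-1-1 = t-2 by ring, show t-1+1 = t by ring] at hc
        have i1 := ih (t-1).toNat (by omega) (t-1) rfl (by omega) (by omega)
        have i2 := ih (t-2).toNat (by omega) (t-2) rfl (by omega) (by omega)
        rw [show t-1-1 = t-2 by ring] at i1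
        rw [show t-2-1 = t-3 by ring] at i2
        have hrec2 : ((n 1 (t-1) : ℤ) : ℚ)
            = (k (t-1) : ℚ) * ((n 1 (t-2) : ℤ) : ℚ) - ((n 1 (t-3) : ℤ) : ℚ) := by
          have := nrec2 hn1 hn0 hrec 1 (t-1) (by omega) (by omega)
          rw [show t-1-1 = t-2 by ring, show t-1-2 = t-3 by ring] at this
          exact_mod_cast this
        rw [i1, i2] at hc
        linear_combination hc - u 1 * hrec2
  have hu1 : u 1 = 0 := by
    have hc := huc s hs le_rfl
    unfold Cz at hc
    rw [hu0 (s+1) (by omega)] at hc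
    have i1 := claim (s-1).toNat (s-1) rfl (by omega) (by omega)
    have i2 := claim s.toNat s rfl (by omega) le_rfl
    rw [show s-1-1 = s-2 by ring] at i1
    rw [i1, i2] at hc
    have hrec2 : ((n 1 s : ℤ) : ℚ)
        = (k s : ℚ) * ((n 1 (s-1) : ℤ) : ℚ) - ((n 1 (s-2) : ℤ) : ℚ) := by
      exact_mod_cast nrec2 hn1 hn0 hrec 1 s hs le_rfl
    have hz : ((n 1 s : ℤ) : ℚ) * u 1 = 0 := by linear_combination u 1 * hrec2 - hc
    rcases mul_eq_zero.mp hz with h | h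
    · exact absurd h (ne_of_gt (np_pos hs hk hn1 hn0 hrec))
    · exact h
  intro t
  by_cases ht : 0 ≤ t ∧ t ≤ s
  · rw [claim t.toNat t rfl ht.1 ht.2, hu1, mul_zero]
  · exact hu0 t (by omega)

end Part2b

section Part2c
variable {s : ℤ} {k : ℤ → ℤ} {n : ℤ → ℤ → ℤ}

private lemma sumB
    (B : ↥(Finset.Icc (1 : ℤ) s) → ↥(Finset.Icc (1 : ℤ) s) → ℤ)
    (hB : ∀ i j : ↥(Finset.Icc (1 : ℤ) s), B i j =
      if (i : ℤ) = (j : ℤ) then -(k (i : ℤ))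
      else if (i : ℤ) = (j : ℤ) + 1 ∨ (j : ℤ) = (i : ℤ) + 1 then 1 else 0)
    (f : ↥(Finset.Icc (1:ℤ) s) → ℚ) (j : ↥(Finset.Icc (1:ℤ) s)) :
    (∑ i, f i * (B i j : ℚ))
      = ExtQ s f ((j:ℤ)-1) + ExtQ s f ((j:ℤ)+1) - (k (j:ℤ) : ℚ) * ExtQ s f (j:ℤ) := by
  have hcoe : ∀ i : ↥(Finset.Icc (1:ℤ) s), f i * (B i j : ℚ)
      = (fun t => ExtQ s f t * ((if t = (j:ℤ)-1 then (1:ℚ) else 0)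
          + (if t = (j:ℤ)+1 then (1:ℚ) else 0)
          + (if t = (j:ℤ) then -((k (j:ℤ)):ℚ) else 0))) (i:ℤ) := by
    intro i
    simp only
    rw [ExtQ_coe, hB i j]
    by_cases h1 : (i:ℤ) = (j:ℤ)
    · rw [if_pos h1, if_neg (by omega), if_neg (by omega), if_pos h1]
      push_cast [h1]
      ring
    · rw [if_neg h1]
      by_cases h2 : (i:ℤ) = (j:ℤ)+1
      · rw [if_pos (Or.inl h2), if_neg (by omega), if_pos h2, if_neg h1]
        push_cast
        ring
      · by_cases h3 : (j:ℤ) = (i:ℤ)+1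
        · rw [if_pos (Or.inr h3), if_pos (by omega : (i:ℤ) = (j:ℤ)-1),
            if_neg h2, if_neg h1]
          push_cast
          ring
        · rw [if_neg (by tauto), if_neg (by omega), if_neg h2, if_neg h1]
          push_cast
          ring
  have hsc := Finset.sum_coe_sort (Finset.Icc (1:ℤ) s)
    (fun t => ExtQ s f t * ((if t = (j:ℤ)-1 then (1:ℚ) else 0)
          + (if t = (j:ℤ)+1 then (1:ℚ) else 0)
          + (if t = (j:ℤ) then -((k (j:ℤ)):ℚ) else 0)))
  rw [Finset.sum_congr rfl (fun i _ => hcoe i), hsc]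
  simp only [mul_add]
  rw [Finset.sum_add_distrib, Finset.sum_add_distrib, sum_extq_ite, sum_extq_ite, sum_extq_ite]
  ring

private lemma gs_eq_Gs (hs : 1 ≤ s) (hk : ∀ i, 1 ≤ i → i ≤ s → 2 ≤ k i)
    (hn1 : ∀ i, n i (i - 1) = 1) (hn0 : ∀ i j, j < i - 1 → n i j = 0)
    (hrec : ∀ i j, i ≤ j → j ≤ s → n i j = k i * n (i + 1) j - n (i + 2) j)
    (B : ↥(Finset.Icc (1 : ℤ) s) → ↥(Finset.Icc (1 : ℤ) s) → ℤ)
    (hB : ∀ i j : ↥(Finset.Icc (1 : ℤ) s), B i j =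
      if (i : ℤ) = (j : ℤ) then -(k (i : ℤ))
      else if (i : ℤ) = (j : ℤ) + 1 ∨ (j : ℤ) = (i : ℤ) + 1 then 1 else 0)
    (gs : ↥(Finset.Icc (1 : ℤ) s) → ℚ)
    (hgs : ∀ j : ↥(Finset.Icc (1 : ℤ) s),
      ∑ i, gs i * (B i j : ℚ) = if (j : ℤ) = s then 1 else 0) :
    ∀ i : ↥(Finset.Icc (1:ℤ) s), gs i = Gs s n (i : ℤ) := by
  have hvan : Vanish s (fun t => ExtQ s gs t - Gs s n t) := by
    intro t ht
    simp only
    rw [ExtQ_vanish gs t ht, Gs_vanish t ht, sub_zero]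
  have hcz : ∀ j, 1 ≤ j → j ≤ s → Cz k (fun t => ExtQ s gs t - Gs s n t) j = 0 := by
    intro j h1 h2
    have hj : j ∈ Finset.Icc (1:ℤ) s := Finset.mem_Icc.mpr ⟨h1, h2⟩
    have e1 := hgs ⟨j, hj⟩
    rw [sumB B hB gs ⟨j, hj⟩] at e1
    have e1' : ExtQ s gs (j-1) + ExtQ s gs (j+1) - (k j:ℚ) * ExtQ s gs j
        = if j = s then (1:ℚ) else 0 := e1
    have e2 := Cz_Gs hs hk hn1 hn0 hrec h1 h2
    unfold Cz at e2 ⊢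
    simp only
    linear_combination e1' - e2
  have hker := kernel hs hk hn1 hn0 hrec _ hvan hcz
  intro i
  have h := hker (i:ℤ)
  rw [ExtQ_coe] at h
  linarith

end Part2c

section Part3
variable {s : ℤ} {k : ℤ → ℤ} {n : ℤ → ℤ → ℤ}

private noncomputable def ChiZ (s : ℤ) (k : ℤ → ℤ) (v : ℤ → ℚ) : ℚ :=
  (-(∑ j ∈ Finset.Icc 1 s, v j * ((k j : ℚ) - 2)) - ∑ j ∈ Finset.Icc 1 s, v j * Cz k v j) / 2

private def ValidP (s : ℤ) (k : ℤ → ℤ) (v : ℤ → ℚ) : Prop :=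
  ∀ j, 1 ≤ j → j ≤ s → Cz k v j ≤ 0

private def CosetP (s : ℤ) (n : ℤ → ℤ → ℤ) (a : ℤ) (v : ℤ → ℚ) : Prop :=
  ∃ z : ℤ → ℤ, ∀ t, 1 ≤ t → t ≤ s →
    v t = (a : ℚ) * ((n 1 (t-1) : ℤ) : ℚ) / ((n 1 s : ℤ) : ℚ) + (z t : ℚ)

private lemma fract_div (m p : ℤ) (hp : 0 < p) :
    Int.fract ((m:ℚ)/(p:ℚ)) = ((m % p : ℤ):ℚ)/(p:ℚ) := by
  have hp' : (p:ℚ) ≠ 0 := by positivity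
  have h1 : (m:ℚ)/(p:ℚ) = ((m % p : ℤ):ℚ)/(p:ℚ) + ((m / p : ℤ) : ℚ) := by
    field_simp
    rw [show ((m % p :ℤ):ℚ) + (p:ℚ) * ((m/p : ℤ):ℚ) = ((m % p + p * (m/p) : ℤ) : ℚ) by push_cast; ring]
    rw [add_comm (m % p), Int.mul_ediv_add_emod]
  rw [h1, Int.fract_add_intCast, Int.fract_eq_self]
  constructor
  · exact div_nonneg (by exact_mod_cast Int.emod_nonneg m (ne_of_gt hp)) (by positivity)
  · rw [div_lt_one (by positivity)]
    exact_mod_cast Int.emod_lt_of_pos m hp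

private lemma coset_ext (hs : 1 ≤ s) (hk : ∀ i, 1 ≤ i → i ≤ s → 2 ≤ k i)
    (hn1 : ∀ i, n i (i - 1) = 1) (hn0 : ∀ i j, j < i - 1 → n i j = 0)
    (hrec : ∀ i j, i ≤ j → j ≤ s → n i j = k i * n (i + 1) j - n (i + 2) j)
    (a : ℤ) (v : ℤ → ℚ) (hvan : Vanish s v) (hcs : CosetP s n a v) :
    ∃ z : ℤ → ℤ, ∀ t, 0 ≤ t → t ≤ s+1 →
      v t = (a:ℚ) * ((n 1 (t-1):ℤ):ℚ) / ((n 1 s:ℤ):ℚ) + (z t : ℚ) := by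
  obtain ⟨z0, hz0⟩ := hcs
  have hp' : ((n 1 s : ℤ):ℚ) ≠ 0 := ne_of_gt (np_pos hs hk hn1 hn0 hrec)
  refine ⟨fun t => if t ≤ 0 then 0 else if t = s+1 then -a else z0 t, ?_⟩
  intro t h0 h1
  by_cases hA : t = 0
  · subst hA
    rw [hvan 0 (by omega), show ((0:ℤ)-1) = -1 by ring, hn0 1 (-1) (by omega)]
    beta_reduce
    norm_num
  by_cases hB : t = s+1
  · subst hB
    rw [hvan (s+1) (by omega), show (s+1-1 : ℤ) = s by ring]
    beta_reduce
    rw [if_neg (by omega), if_pos rfl]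
    push_cast
    field_simp
    ring
  · beta_reduce
    rw [if_neg (by omega), if_neg hB]
    exact hz0 t (by omega) (by omega)

private lemma valid_nonneg (hs : 1 ≤ s) (hk : ∀ i, 1 ≤ i → i ≤ s → 2 ≤ k i)
    (v : ℤ → ℚ) (hvan : Vanish s v) (hval : ValidP s k v) : ∀ t, 0 ≤ v t := by
  by_contra hcon
  push_neg at hcon
  obtain ⟨t0, ht0⟩ := hcon
  have hne : (Finset.Icc (1:ℤ) s).Nonempty := ⟨1, by simp only [Finset.mem_Icc]; omega⟩
  obtain ⟨t1, ht1m, ht1min⟩ := Finset.exists_min_image (Finset.Icc 1 s) v hne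
  have hμ : v t1 < 0 := by
    by_cases hm : t0 ∈ Finset.Icc (1:ℤ) s
    · exact lt_of_le_of_lt (ht1min t0 hm) ht0
    · rw [hvan t0 (by simpa [Finset.mem_Icc] using hm)] at ht0
      exact absurd ht0 (by norm_num)
  set T := (Finset.Icc (1:ℤ) s).filter (fun t => v t = v t1) with hT
  have hTne : T.Nonempty := ⟨t1, by simp only [hT, Finset.mem_filter]; exact ⟨ht1m, trivial⟩⟩
  set t2 := T.max' hTne with ht2
  have ht2T : t2 ∈ T := T.max'_mem hTne
  have ht2m : t2 ∈ Finset.Icc (1:ℤ) s ∧ v t2 = v t1 := by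
    simpa [hT, Finset.mem_filter] using ht2T
  have hb := Finset.mem_Icc.mp ht2m.1
  have hup : v t1 < v (t2+1) := by
    by_cases hc : t2+1 ≤ s
    · have hmem : t2+1 ∈ Finset.Icc (1:ℤ) s := Finset.mem_Icc.mpr ⟨by omega, hc⟩
      rcases eq_or_lt_of_le (ht1min _ hmem) with h | h
      · exfalso
        have : t2+1 ∈ T := by
          simp only [hT, Finset.mem_filter]
          exact ⟨hmem, h.symm⟩
        have := T.le_max' _ this
        omega
      · exact h
    · rw [hvan (t2+1) (by omega)]
      exact hμ
  have hdn : v t1 ≤ v (t2-1) := by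
    by_cases hc : 1 ≤ t2-1
    · exact ht1min _ (Finset.mem_Icc.mpr ⟨hc, by omega⟩)
    · rw [hvan (t2-1) (by omega)]
      exact le_of_lt hμ
  have hcz := hval t2 hb.1 hb.2
  unfold Cz at hcz
  have hkk : (2:ℚ) ≤ (k t2 : ℚ) := by exact_mod_cast hk t2 hb.1 hb.2
  have hprod : ((k t2:ℚ) - 2) * v t1 ≤ 0 :=
    mul_nonpos_of_nonneg_of_nonpos (by linarith) (le_of_lt hμ)
  rw [ht2m.2] at hcz
  nlinarith [hcz, hup, hdn, hprod]

private lemma Cz_int (hs : 1 ≤ s) (hk : ∀ i, 1 ≤ i → i ≤ s → 2 ≤ k i)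
    (hn1 : ∀ i, n i (i - 1) = 1) (hn0 : ∀ i j, j < i - 1 → n i j = 0)
    (hrec : ∀ i j, i ≤ j → j ≤ s → n i j = k i * n (i + 1) j - n (i + 2) j)
    (a : ℤ) (v : ℤ → ℚ) (z : ℤ → ℤ)
    (hz : ∀ t, 0 ≤ t → t ≤ s+1 →
      v t = (a:ℚ) * ((n 1 (t-1):ℤ):ℚ) / ((n 1 s:ℤ):ℚ) + (z t : ℚ))
    {j : ℤ} (h1 : 1 ≤ j) (h2 : j ≤ s) :
    Cz k v j = ((z (j-1) + z (j+1) - k j * z j : ℤ) : ℚ) := by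
  have hp' : ((n 1 s : ℤ):ℚ) ≠ 0 := ne_of_gt (np_pos hs hk hn1 hn0 hrec)
  have hrec2 : ((n 1 j : ℤ) : ℚ)
      = (k j : ℚ) * ((n 1 (j-1) : ℤ) : ℚ) - ((n 1 (j-2) : ℤ) : ℚ) := by
    exact_mod_cast nrec2 hn1 hn0 hrec 1 j h1 h2
  unfold Cz
  rw [hz (j-1) (by omega) (by omega), hz (j+1) (by omega) (by omega), hz j (by omega) (by omega),
    show j-1-1 = j-2 by ring, show j+1-1 = j by ring]
  push_cast
  field_simp
  linear_combination (a:ℚ) * hrec2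

end Part3

section Part3b
variable {s : ℤ} {k : ℤ → ℤ} {n : ℤ → ℤ → ℤ}

private lemma last_coord (hs : 1 ≤ s) (hk : ∀ i, 1 ≤ i → i ≤ s → 2 ≤ k i)
    (hn1 : ∀ i, n i (i - 1) = 1) (hn0 : ∀ i j, j < i - 1 → n i j = 0)
    (hrec : ∀ i j, i ≤ j → j ≤ s → n i j = k i * n (i + 1) j - n (i + 2) j)
    (a : ℤ) (ha0 : 0 ≤ a) (v : ℤ → ℚ)
    (hvan : Vanish s v) (hval : ValidP s k v) (hcs : CosetP s n a v)
    (hmin : ∀ y, Vanish s y → ValidP s k y → CosetP s n a y → ∀ t, v t ≤ y t) :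
    v s = (((a * n 1 (s-1)) % (n 1 s) : ℤ) : ℚ) / ((n 1 s : ℤ) : ℚ) := by
  have hp0 : (0:ℤ) < n 1 s := by
    have := (n1_pos hs hk hn1 hn0 hrec s (by omega) le_rfl).1; omega
  have hp : (0:ℚ) < ((n 1 s : ℤ):ℚ) := np_pos hs hk hn1 hn0 hrec
  have hp' : ((n 1 s : ℤ):ℚ) ≠ 0 := ne_of_gt hp
  set p := n 1 s with hpdef
  set ρ := (a * n 1 (s-1)) % p with hρdef
  have hρ0 : 0 ≤ ρ := Int.emod_nonneg _ (ne_of_gt hp0)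
  have hρp : ρ < p := Int.emod_lt_of_pos _ hp0
  set y : ℤ → ℚ := fun t => if 1 ≤ t ∧ t ≤ s then (ρ:ℚ) * ((n (t+1) s : ℤ):ℚ) / ((p:ℤ):ℚ) else 0
    with hydef
  have hyvan : Vanish s y := by
    intro t ht; simp only [hydef]; rw [if_neg ht]
  have hyeq : ∀ t, 1 ≤ t → t ≤ s+1 → y t = (ρ:ℚ) * ((n (t+1) s : ℤ):ℚ) / ((p:ℤ):ℚ) := by
    intro t h1 h2
    by_cases hts : t ≤ s
    · simp only [hydef]; rw [if_pos ⟨h1, hts⟩]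
    · have ht : t = s+1 := by omega
      subst ht
      rw [hyvan (s+1) (by omega), hn0 (s+1+1) s (by omega)]
      norm_num
  have hyval : ValidP s k y := by
    intro j h1 h2
    unfold Cz
    by_cases hj1 : j = 1
    · subst hj1
      rw [hyvan (1-1) (by omega), hyeq (1+1) (by omega) (by omega), hyeq 1 (by omega) (by omega)]
      have hr := hrec 1 s (by omega) le_rfl
      have hr' : ((n (1+1+1) s : ℤ):ℚ) - (k 1:ℚ) * ((n (1+1) s : ℤ):ℚ) = -((p:ℤ):ℚ) := by
        rw [hpdef]
        push_cast
        have h0 := hrec 1 s (by omega) le_rfl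
        norm_num at h0
        exact_mod_cast (by linarith [h0] : (n 3 s:ℤ) - k 1 * n 2 s = -(n 1 s))
      have e : (0:ℚ) + (ρ:ℚ) * ((n (1+1+1) s : ℤ):ℚ) / ((p:ℤ):ℚ)
          - (k 1:ℚ) * ((ρ:ℚ) * ((n (1+1) s : ℤ):ℚ) / ((p:ℤ):ℚ))
          = (ρ:ℚ) * (((n (1+1+1) s : ℤ):ℚ) - (k 1:ℚ) * ((n (1+1) s : ℤ):ℚ)) / ((p:ℤ):ℚ) := by
        ring
      rw [e, hr']
      rw [mul_neg, neg_div, mul_div_assoc, div_self hp', mul_one]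
      simp only [neg_nonpos]
      exact_mod_cast hρ0
    · rw [hyeq (j-1) (by omega) (by omega), hyeq (j+1) (by omega) (by omega),
        hyeq j (by omega) (by omega), show j-1+1 = j by ring, show j+1+1 = j+2 by ring]
      have hr := hrec j s (by omega) le_rfl
      have hz : ((n j s : ℤ):ℚ) + ((n (j+2) s : ℤ):ℚ) - (k j:ℚ) * ((n (j+1) s : ℤ):ℚ) = 0 := by
        have h0 : (n j s : ℤ) + n (j+2) s - k j * n (j+1) s = 0 := by linarith [hr]
        exact_mod_cast h0
      have e : (ρ:ℚ) * ((n j s : ℤ):ℚ) / ((p:ℤ):ℚ) + (ρ:ℚ) * ((n (j+2) s : ℤ):ℚ) / ((p:ℤ):ℚ)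
          - (k j:ℚ) * ((ρ:ℚ) * ((n (j+1) s : ℤ):ℚ) / ((p:ℤ):ℚ))
          = (ρ:ℚ) * (((n j s : ℤ):ℚ) + ((n (j+2) s : ℤ):ℚ) - (k j:ℚ) * ((n (j+1) s : ℤ):ℚ))
            / ((p:ℤ):ℚ) := by ring
      rw [e, hz]
      simp
  have hycs : CosetP s n a y := by
    refine ⟨fun t => (ρ * n (t+1) s - a * n 1 (t-1)) / p, ?_⟩
    intro t h1 h2
    have hcong := ncong hs hn1 hn0 hrec t (by omega) h2
    have hdvd : p ∣ (ρ * n (t+1) s - a * n 1 (t-1)) := by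
      have h1' : p ∣ ρ - a * n 1 (s-1) := ⟨-(a * n 1 (s-1) / p), by rw [hρdef, Int.emod_def]; ring⟩
      obtain ⟨c, hc⟩ := h1'
      exact ⟨n (t+1) s * c + a * n (t+1) (s-1), by linear_combination (n (t+1) s) * hc - a * hcong⟩
    obtain ⟨c2, hc2⟩ := hdvd
    simp only [hydef]
    rw [if_pos ⟨h1, h2⟩, hc2, Int.mul_ediv_cancel_left _ (ne_of_gt hp0)]
    have hc2' : (ρ:ℚ) * ((n (t+1) s : ℤ):ℚ) - (a:ℚ) * ((n 1 (t-1):ℤ):ℚ) = ((p:ℤ):ℚ) * (c2:ℚ) := by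
      exact_mod_cast congrArg (fun m : ℤ => (m:ℚ)) hc2
    field_simp
    linear_combination hc2' - (a:ℚ) * ((n 1 (t-1):ℤ):ℚ) * mul_inv_cancel₀ hp'
  have hub : v s ≤ (ρ:ℚ)/((p:ℤ):ℚ) := by
    have h := hmin y hyvan hyval hycs s
    rw [hyeq s hs (by omega)] at h
    have e1 : n (s+1) s = 1 := by have := hn1 (s+1); simpa using this
    rw [e1] at h
    simpa using h
  obtain ⟨z0, hz0⟩ := hcs
  have hvs := hz0 s hs le_rfl
  have hnn := valid_nonneg hs hk v hvan hval s
  have hdiv : a * n 1 (s-1) = p * ((a * n 1 (s-1))/p) + ρ := (Int.mul_ediv_add_emod _ _).symm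
  set D : ℤ := (a * n 1 (s-1))/p + z0 s with hDdef
  have hkey : v s = (ρ:ℚ)/((p:ℤ):ℚ) + (D:ℚ) := by
    rw [hvs, hDdef]
    have hdiv' : (a:ℚ) * ((n 1 (s-1):ℤ):ℚ)
        = ((p:ℤ):ℚ) * (((a * n 1 (s-1))/p : ℤ):ℚ) + (ρ:ℚ) := by
      exact_mod_cast congrArg (fun m : ℤ => (m:ℚ)) hdiv
    push_cast
    field_simp
    linear_combination hdiv' + (a:ℚ) * ((n 1 (s-1):ℤ):ℚ) * mul_inv_cancel₀ (a := ((n 1 s:ℤ):ℚ)) hp'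
  have hD0 : (D:ℚ) ≤ 0 := by linarith [hub, hkey]
  have hDge : (0:ℚ) ≤ (ρ:ℚ)/((p:ℤ):ℚ) + (D:ℚ) := by rw [← hkey]; exact hnn
  have hfr1 : (ρ:ℚ)/((p:ℤ):ℚ) < 1 := by
    rw [div_lt_one hp]
    exact_mod_cast hρp
  have hDz : D = 0 := by
    have h1 : D ≤ 0 := by exact_mod_cast hD0
    have h2 : (-1:ℚ) < (D:ℚ) := by linarith
    have h2' : (-1:ℤ) < D := by exact_mod_cast h2
    omega
  rw [hkey, hDz]
  norm_num

end Part3b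
section Part4
variable {s : ℤ} {k : ℤ → ℤ} {n : ℤ → ℤ → ℤ}

private theorem mainz (hs : 1 ≤ s) (hk : ∀ i, 1 ≤ i → i ≤ s → 2 ≤ k i)
    (hn1 : ∀ i, n i (i - 1) = 1) (hn0 : ∀ i j, j < i - 1 → n i j = 0)
    (hrec : ∀ i j, i ≤ j → j ≤ s → n i j = k i * n (i + 1) j - n (i + 2) j)
    (a : ℤ) (ha0 : 0 ≤ a) :
    ∀ v : ℤ → ℚ, Vanish s v → ValidP s k v → CosetP s n a v →
    (∀ y, Vanish s y → ValidP s k y → CosetP s n a y → ∀ t, v t ≤ y t) →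
    ChiZ s k v = (a:ℚ) * (1 - ((n 1 s:ℤ):ℚ)) / (2 * ((n 1 s:ℤ):ℚ))
      + ∑ j ∈ Finset.Icc (1:ℤ) a, Int.fract (((j * n 1 (s - 1) : ℤ) : ℚ) / ((n 1 s : ℤ) : ℚ)) := by
  have hp0 : (0:ℤ) < n 1 s := by
    have := (n1_pos hs hk hn1 hn0 hrec s (by omega) le_rfl).1; omega
  have hp : (0:ℚ) < ((n 1 s : ℤ):ℚ) := np_pos hs hk hn1 hn0 hrec
  have hp' : ((n 1 s : ℤ):ℚ) ≠ 0 := ne_of_gt hp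
  refine Int.le_induction (motive := fun a _ => ∀ v : ℤ → ℚ, Vanish s v → ValidP s k v → CosetP s n a v →
    (∀ y, Vanish s y → ValidP s k y → CosetP s n a y → ∀ t, v t ≤ y t) →
    ChiZ s k v = (a:ℚ) * (1 - ((n 1 s:ℤ):ℚ)) / (2 * ((n 1 s:ℤ):ℚ))
      + ∑ j ∈ Finset.Icc (1:ℤ) a, Int.fract (((j * n 1 (s - 1) : ℤ) : ℚ) / ((n 1 s : ℤ) : ℚ)))
    ?_ ?_ a ha0
  · -- base case a = 0
    intro v hvan hval hcs hmin
    have hzero : ∀ t, v t = 0 := by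
      have hyv : Vanish s (fun _ => (0:ℚ)) := fun t _ => rfl
      have hyval : ValidP s k (fun _ => (0:ℚ)) := by
        intro j _ _; unfold Cz; norm_num
      have hycs : CosetP s n 0 (fun _ => (0:ℚ)) := by
        refine ⟨fun _ => 0, ?_⟩
        intro t _ _; norm_num
      have hle := hmin _ hyv hyval hycs
      have hge := valid_nonneg hs hk v hvan hval
      intro t
      have := hle t
      have := hge t
      linarith [hle t, hge t]
    unfold ChiZ
    rw [Finset.sum_eq_zero (fun j _ => by rw [hzero j, zero_mul]),
      Finset.sum_eq_zero (fun j _ => by rw [hzero j, zero_mul]),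
      Finset.Icc_eq_empty (by omega : ¬(1:ℤ) ≤ 0)]
    norm_num
  · -- inductive step
    intro a ha0 IH
    intro v hvan hval hcs hmin
    obtain ⟨z, hz⟩ := coset_ext hs hk hn1 hn0 hrec (a+1) v hvan hcs
    have hCz : ∀ j, 1 ≤ j → j ≤ s →
        Cz k v j = ((z (j-1) + z (j+1) - k j * z j : ℤ):ℚ) :=
      fun j hj1 hj2 => Cz_int hs hk hn1 hn0 hrec (a+1) v z hz hj1 hj2
    have hczle : ∀ j, 1 ≤ j → j ≤ s → z (j-1) + z (j+1) - k j * z j ≤ 0 := by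
      intro j hj1 hj2
      have h := hval j hj1 hj2
      rw [hCz j hj1 hj2] at h
      exact_mod_cast h
    set T := (Finset.Icc (0:ℤ) s).filter
      (fun t => t = 0 ∨ ¬(z (t-1) + z (t+1) - k t * z t = 0)) with hTdef
    have hT0 : (0:ℤ) ∈ T :=
      Finset.mem_filter.mpr ⟨Finset.mem_Icc.mpr ⟨le_rfl, by omega⟩, Or.inl rfl⟩
    have hTne : T.Nonempty := ⟨0, hT0⟩
    set i := T.max' hTne with hidef
    have hiT : i ∈ T := T.max'_mem hTne
    have hi' := Finset.mem_filter.mp hiT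
    have hi0 : 0 ≤ i := (Finset.mem_Icc.mp hi'.1).1
    have his : i ≤ s := (Finset.mem_Icc.mp hi'.1).2
    have hcz0 : ∀ t, i < t → t ≤ s → z (t-1) + z (t+1) - k t * z t = 0 := by
      intro t hti hts
      by_contra hne
      have hmem : t ∈ T :=
        Finset.mem_filter.mpr ⟨Finset.mem_Icc.mpr ⟨by omega, hts⟩, Or.inr hne⟩
      have := T.le_max' t hmem
      omega
    have hczi : 1 ≤ i → z (i-1) + z (i+1) - k i * z i ≤ -1 := by
      intro h1
      rcases hi'.2 with h | h
      · omega
      · have := hczle i h1 his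
        omega
    set E : ℤ → ℚ := fun t => if i+1 ≤ t ∧ t ≤ s then 1 else 0 with hEdef
    set d : ℤ → ℚ := fun t => Gs s n t + E t with hddef
    set w : ℤ → ℚ := fun t => v t + d t with hwdef
    have hEvan : Vanish s E := by
      intro t ht
      simp only [hEdef]
      rw [if_neg (by omega)]
    have hdvan : Vanish s d := by
      intro t ht
      simp only [hddef]
      rw [Gs_vanish t ht, hEvan t ht]
      ring
    have hwvan : Vanish s w := by
      intro t ht
      simp only [hwdef]
      rw [hvan t ht, hdvan t ht]
      ring
    have hwcs : CosetP s n a w := by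
      refine ⟨fun t => z t + (if i+1 ≤ t ∧ t ≤ s then 1 else 0), ?_⟩
      intro t h1 h2
      simp only [hwdef, hddef, hEdef]
      rw [hz t (by omega) (by omega), Gs_eq hn0 (by omega) h2]
      split_ifs
      · push_cast; ring
      · push_cast; ring
    have hwval : ValidP s k w := by
      intro j h1 h2
      have hlin : Cz k w j = ((z (j-1) + z (j+1) - k j * z j : ℤ):ℚ)
          + (if j = s then (1:ℚ) else 0) + Cz k E j := by
        have e1 : Cz k w j = Cz k v j + Cz k (Gs s n) j + Cz k E j := by
          simp only [Cz, hwdef, hddef]; ring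
        rw [e1, hCz j h1 h2, Cz_Gs hs hk hn1 hn0 hrec h1 h2]
      rw [hlin]
      have hCzE : Cz k E j = (if i+1 ≤ j-1 ∧ j-1 ≤ s then (1:ℚ) else 0)
          + (if i+1 ≤ j+1 ∧ j+1 ≤ s then (1:ℚ) else 0)
          - (k j:ℚ) * (if i+1 ≤ j ∧ j ≤ s then (1:ℚ) else 0) := by
        simp only [Cz, hEdef]
      rw [hCzE]
      have hkj : (2:ℚ) ≤ (k j:ℚ) := by exact_mod_cast hk j h1 h2
      by_cases hji : j ≤ i - 1
      · rw [if_neg (by omega : ¬(j = s)), if_neg (by omega : ¬(i+1 ≤ j-1 ∧ j-1 ≤ s)),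
          if_neg (by omega : ¬(i+1 ≤ j+1 ∧ j+1 ≤ s)), if_neg (by omega : ¬(i+1 ≤ j ∧ j ≤ s))]
        have hc := hczle j h1 h2
        have hc' : ((z (j-1) + z (j+1) - k j * z j : ℤ):ℚ) ≤ 0 := by exact_mod_cast hc
        linarith
      · by_cases hji2 : j = i
        · have hcap := hczi (by omega)
          rw [hji2]
          have hcap2 : ((z (i-1) + z (i+1) - k i * z i : ℤ):ℚ) ≤ -1 := by exact_mod_cast hcap
          by_cases his2 : i = s
          · rw [if_pos his2, if_neg (by omega : ¬(i+1 ≤ i-1 ∧ i-1 ≤ s)),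
              if_neg (by omega : ¬(i+1 ≤ i+1 ∧ i+1 ≤ s)), if_neg (by omega : ¬(i+1 ≤ i ∧ i ≤ s))]
            linarith
          · rw [if_neg his2, if_neg (by omega : ¬(i+1 ≤ i-1 ∧ i-1 ≤ s)),
              if_pos (⟨le_rfl, by omega⟩ : i+1 ≤ i+1 ∧ i+1 ≤ s), if_neg (by omega : ¬(i+1 ≤ i ∧ i ≤ s))]
            linarith
        · have h0 := hcz0 j (by omega) h2
          rw [h0]
          by_cases hjs : j = s
          · rw [if_pos hjs, if_neg (by omega : ¬(i+1 ≤ j+1 ∧ j+1 ≤ s)),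
              if_pos (⟨by omega, h2⟩ : i+1 ≤ j ∧ j ≤ s)]
            by_cases hm : i+1 ≤ j-1 ∧ j-1 ≤ s
            · rw [if_pos hm]; push_cast; linarith
            · rw [if_neg hm]; push_cast; linarith
          · rw [if_neg hjs, if_pos (⟨by omega, by omega⟩ : i+1 ≤ j+1 ∧ j+1 ≤ s),
              if_pos (⟨by omega, h2⟩ : i+1 ≤ j ∧ j ≤ s)]
            by_cases hm : i+1 ≤ j-1 ∧ j-1 ≤ s
            · rw [if_pos hm]; push_cast; linarith
            · rw [if_neg hm]; push_cast; linarith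
    have hwmin : ∀ x, Vanish s x → ValidP s k x → CosetP s n a x → ∀ t, w t ≤ x t := by
      intro x hxvan hxval hxcs
      obtain ⟨zx, hzx⟩ := coset_ext hs hk hn1 hn0 hrec a x hxvan hxcs
      have hxpvan : Vanish s (fun t => x t - Gs s n t) := by
        intro t ht
        simp only
        rw [hxvan t ht, Gs_vanish t ht]
        ring
      have hxpval : ValidP s k (fun t => x t - Gs s n t) := by
        intro j h1 h2
        have e1 : Cz k (fun t => x t - Gs s n t) j = Cz k x j - Cz k (Gs s n) j := by
          simp only [Cz]; ring
        rw [e1, Cz_Gs hs hk hn1 hn0 hrec h1 h2]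
        have := hxval j h1 h2
        split_ifs <;> linarith
      have hxpcs : CosetP s n (a+1) (fun t => x t - Gs s n t) := by
        refine ⟨zx, ?_⟩
        intro t h1 h2
        simp only
        rw [hzx t (by omega) (by omega), Gs_eq hn0 (by omega) h2]
        push_cast
        ring
      have hvle := hmin _ hxpvan hxpval hxpcs
      have hG0 : ∀ t, 0 ≤ x t - v t - Gs s n t := by
        intro t
        have := hvle t
        linarith
      have hGint : ∀ t, 1 ≤ t → t ≤ s → x t - v t - Gs s n t = ((zx t - z t : ℤ):ℚ) := by
        intro t h1 h2
        rw [hzx t (by omega) (by omega), hz t (by omega) (by omega), Gs_eq hn0 (by omega) h2]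
        push_cast
        ring
      have hblock : ∀ t, i+1 ≤ t → t ≤ s → 1 ≤ x t - v t - Gs s n t := by
        by_contra hcon
        push_neg at hcon
        obtain ⟨t0, ht1, ht2, hlt⟩ := hcon
        set S0 := (Finset.Icc (i+1) s).filter (fun t => x t - v t - Gs s n t < 1) with hS0def
        have hS0ne : S0.Nonempty :=
          ⟨t0, Finset.mem_filter.mpr ⟨Finset.mem_Icc.mpr ⟨ht1, ht2⟩, hlt⟩⟩
        set t1 := S0.max' hS0ne with ht1def
        have ht1S := S0.max'_mem hS0ne
        have ht1m := Finset.mem_filter.mp ht1S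
        have ht1b := Finset.mem_Icc.mp ht1m.1
        have hGz : ∀ t, 1 ≤ t → t ≤ s → x t - v t - Gs s n t < 1 → x t - v t - Gs s n t = 0 := by
          intro t h1 h2 h3
          have hgi := hGint t h1 h2
          have h4 := hG0 t
          rw [hgi] at h3 h4 ⊢
          have l1 : (0:ℤ) ≤ zx t - z t := by exact_mod_cast h4
          have l2 : (zx t - z t : ℤ) < 1 := by exact_mod_cast h3
          have : zx t - z t = 0 := by omega
          rw [this]
          norm_num
        have hGt1 : x t1 - v t1 - Gs s n t1 = 0 := hGz t1 (by omega) ht1b.2 ht1m.2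
        have hxc := hxval t1 (by omega) ht1b.2
        have hsplit : Cz k x t1 = Cz k v t1 + Cz k (Gs s n) t1
            + ((x (t1-1) - v (t1-1) - Gs s n (t1-1)) + (x (t1+1) - v (t1+1) - Gs s n (t1+1))
              - (k t1:ℚ) * (x t1 - v t1 - Gs s n t1)) := by
          simp only [Cz]; ring
        rw [hsplit, hCz t1 (by omega) ht1b.2, Cz_Gs hs hk hn1 hn0 hrec (by omega) ht1b.2,
          hcz0 t1 (by omega) ht1b.2, hGt1] at hxc
        by_cases hts : t1 = s
        · have hGs1 : x (s+1) - v (s+1) - Gs s n (s+1) = 0 := by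
            rw [hxvan (s+1) (by omega), hvan (s+1) (by omega), Gs_vanish (s+1) (by omega)]
            ring
          rw [if_pos hts] at hxc
          rw [hts] at hxc
          rw [hGs1] at hxc
          have hg := hG0 (s-1)
          push_cast at hxc
          linarith
        · have hnext : 1 ≤ x (t1+1) - v (t1+1) - Gs s n (t1+1) := by
            by_contra hn2
            push_neg at hn2
            have hmem : t1+1 ∈ S0 :=
              Finset.mem_filter.mpr ⟨Finset.mem_Icc.mpr ⟨by omega, by omega⟩, by linarith⟩
            have := S0.le_max' _ hmem
            omega
          rw [if_neg hts] at hxc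
          have hg := hG0 (t1-1)
          push_cast at hxc
          linarith
      intro t
      by_cases htI : 1 ≤ t ∧ t ≤ s
      · simp only [hwdef, hddef, hEdef]
        by_cases hb : i+1 ≤ t ∧ t ≤ s
        · rw [if_pos hb]
          have := hblock t hb.1 hb.2
          linarith
        · rw [if_neg hb]
          have := hG0 t
          linarith
      · rw [hwvan t htI, hxvan t htI]
    have hχw := IH w hwvan hwval hwcs hwmin
    have hvs := last_coord hs hk hn1 hn0 hrec (a+1) (by omega) v hvan hval hcs hmin
    -- sums for the chi difference
    have hA2 : ∑ j ∈ Finset.Icc (1:ℤ) s, d j * Cz k v j = v s := by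
      rw [Finset.sum_congr rfl (fun j (_ : j ∈ Finset.Icc (1:ℤ) s) =>
        (by simp only [hddef]; ring :
          d j * Cz k v j = Gs s n j * Cz k v j + E j * Cz k v j)),
        Finset.sum_add_distrib]
      have eGs : ∑ j ∈ Finset.Icc (1:ℤ) s, Gs s n j * Cz k v j = v s := by
        rw [sum_symm hs (Gs s n) v Gs_vanish hvan]
        rw [Finset.sum_congr rfl (fun j hj => by
          rw [Cz_Gs hs hk hn1 hn0 hrec (Finset.mem_Icc.mp hj).1 (Finset.mem_Icc.mp hj).2])]
        exact sum_dirac hs v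
      have eE : ∑ j ∈ Finset.Icc (1:ℤ) s, E j * Cz k v j = 0 := by
        apply Finset.sum_eq_zero
        intro j hj
        obtain ⟨h1, h2⟩ := Finset.mem_Icc.mp hj
        by_cases hb : i+1 ≤ j ∧ j ≤ s
        · rw [hCz j h1 h2, hcz0 j (by omega) h2]
          norm_num
        · simp only [hEdef]
          rw [if_neg hb, zero_mul]
      rw [eGs, eE]
      ring
    have hA3 : ∑ j ∈ Finset.Icc (1:ℤ) s, v j * Cz k d j = v s := by
      rw [sum_symm hs v d hvan hdvan]
      exact hA2
    have hA4a : ∑ j ∈ Finset.Icc (1:ℤ) s, d j * Cz k (Gs s n) j = d s := by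
      rw [Finset.sum_congr rfl (fun j hj => by
        rw [Cz_Gs hs hk hn1 hn0 hrec (Finset.mem_Icc.mp hj).1 (Finset.mem_Icc.mp hj).2])]
      exact sum_dirac hs d
    have hA4b : ∑ j ∈ Finset.Icc (1:ℤ) s, Gs s n j * Cz k E j = E s := by
      rw [sum_symm hs (Gs s n) E Gs_vanish hEvan]
      rw [Finset.sum_congr rfl (fun j hj => by
        rw [Cz_Gs hs hk hn1 hn0 hrec (Finset.mem_Icc.mp hj).1 (Finset.mem_Icc.mp hj).2])]
      exact sum_dirac hs E
    have hsub : Finset.Icc (i+1) s ⊆ Finset.Icc (1:ℤ) s := by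
      intro t ht
      rw [Finset.mem_Icc] at *
      omega
    have hEone : ∀ j ∈ Finset.Icc (i+1) s, E j = 1 := by
      intro j hj
      obtain ⟨h1, h2⟩ := Finset.mem_Icc.mp hj
      simp only [hEdef]
      rw [if_pos ⟨h1, h2⟩]
    have hEzero : ∀ x ∈ Finset.Icc (1:ℤ) s, x ∉ Finset.Icc (i+1) s → E x = 0 := by
      intro x hx hnx
      have h1 := Finset.mem_Icc.mp hx
      have h2 : ¬(i+1 ≤ x ∧ x ≤ s) := by
        intro hc
        exact hnx (Finset.mem_Icc.mpr hc)
      simp only [hEdef]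
      rw [if_neg h2]
    have hA5 : ∑ j ∈ Finset.Icc (1:ℤ) s, E j * Cz k E j
        = ∑ j ∈ Finset.Icc (i+1) s, Cz k E j := by
      rw [← Finset.sum_subset hsub (fun x hx hnx => by rw [hEzero x hx hnx, zero_mul])]
      apply Finset.sum_congr rfl
      intro j hj
      rw [hEone j hj, one_mul]
    have hA6 : ∑ j ∈ Finset.Icc (1:ℤ) s, E j * ((k j:ℚ) - 2)
        = ∑ j ∈ Finset.Icc (i+1) s, ((k j:ℚ) - 2) := by
      rw [← Finset.sum_subset hsub (fun x hx hnx => by rw [hEzero x hx hnx, zero_mul])]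
      apply Finset.sum_congr rfl
      intro j hj
      rw [hEone j hj, one_mul]
    have hcancel : ∑ j ∈ Finset.Icc (i+1) s, ((k j:ℚ) - 2)
        + ∑ j ∈ Finset.Icc (i+1) s, Cz k E j = -(E s) - E (i+1) := by
      rw [← Finset.sum_add_distrib]
      rw [Finset.sum_congr rfl (fun j hj =>
        (by
          have hEj : E j = 1 := hEone j hj
          simp only [Cz]
          rw [hEj]
          ring :
          ((k j:ℚ) - 2) + Cz k E j = (E (j-1) - E j) + (E (j+1) - E j)))]
      rw [Finset.sum_add_distrib]
      have t1 : ∑ j ∈ Finset.Icc (i+1) s, (E (j-1) - E j) = E i - E s := by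
        have ht := sum_tele (f := E) (a := i+1) (b := s) (by omega)
        have e1 : ∑ j ∈ Finset.Icc (i+1) s, (E (j-1) - E j)
            = -(∑ j ∈ Finset.Icc (i+1) s, (E j - E (j-1))) := by
          rw [← Finset.sum_neg_distrib]
          apply Finset.sum_congr rfl
          intro j _
          ring
        rw [e1, ht, show i+1-1 = i by ring]
        ring
      have t2 : ∑ j ∈ Finset.Icc (i+1) s, (E (j+1) - E j) = E (s+1) - E (i+1) := by
        have ht := sum_tele (f := fun t => E (t+1)) (a := i+1) (b := s) (by omega)
        rw [Finset.sum_congr rfl (fun j (_ : j ∈ Finset.Icc (i+1) s) =>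
          (by
            simp only
            rw [show j-1+1 = j by ring] :
            E (j+1) - E j = (fun t => E (t+1)) j - (fun t => E (t+1)) (j-1)))]
        rw [ht, show i+1-1 = i by ring]
      rw [t1, t2]
      have hEi : E i = 0 := by
        simp only [hEdef]
        rw [if_neg (by omega)]
      have hEs1 : E (s+1) = 0 := by
        simp only [hEdef]
        rw [if_neg (by omega)]
      rw [hEi, hEs1]
      ring
    have hEeq : E s = E (i+1) := by
      simp only [hEdef]
      by_cases hb : i+1 ≤ s
      · rw [if_pos (⟨hb, le_rfl⟩ : i+1 ≤ s ∧ s ≤ s), if_pos (⟨le_rfl, hb⟩ : i+1 ≤ i+1 ∧ i+1 ≤ s)]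
      · rw [if_neg (by omega : ¬(i+1 ≤ s ∧ s ≤ s)), if_neg (by omega : ¬(i+1 ≤ i+1 ∧ i+1 ≤ s))]
    have hKsumG : ∑ j ∈ Finset.Icc (1:ℤ) s, Gs s n j * ((k j:ℚ) - 2)
        = -(((n 1 s:ℤ):ℚ) - ((n 1 (s-1):ℤ):ℚ) - 1) / ((n 1 s:ℤ):ℚ) := by
      rw [Finset.sum_congr rfl (fun j hj =>
        (by
          have hm := Finset.mem_Icc.mp hj
          rw [Gs_eq hn0 (by omega) hm.2]
          ring :
          Gs s n j * ((k j:ℚ) - 2)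
            = -(((n 1 (j-1):ℤ):ℚ) * ((k j:ℚ) - 2)) / ((n 1 s:ℤ):ℚ)))]
      rw [← Finset.sum_div, Finset.sum_neg_distrib, Ksum hs hk hn1 hn0 hrec]
    have hA1 : ∑ j ∈ Finset.Icc (1:ℤ) s, d j * ((k j:ℚ) - 2)
        = -(((n 1 s:ℤ):ℚ) - ((n 1 (s-1):ℤ):ℚ) - 1) / ((n 1 s:ℤ):ℚ)
          + ∑ j ∈ Finset.Icc (i+1) s, ((k j:ℚ) - 2) := by
      rw [Finset.sum_congr rfl (fun j (_ : j ∈ Finset.Icc (1:ℤ) s) =>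
        (by simp only [hddef]; ring :
          d j * ((k j:ℚ) - 2) = Gs s n j * ((k j:ℚ) - 2) + E j * ((k j:ℚ) - 2))),
        Finset.sum_add_distrib, hKsumG, hA6]
    have hA4 : ∑ j ∈ Finset.Icc (1:ℤ) s, d j * Cz k d j
        = d s + (E s + ∑ j ∈ Finset.Icc (i+1) s, Cz k E j) := by
      rw [Finset.sum_congr rfl (fun j (_ : j ∈ Finset.Icc (1:ℤ) s) =>
        (by
          simp only [Cz, hddef]
          ring :
          d j * Cz k d j = d j * Cz k (Gs s n) j
            + (Gs s n j * Cz k E j + E j * Cz k E j))),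
        Finset.sum_add_distrib, Finset.sum_add_distrib, hA4a, hA4b, hA5]
    have hds : d s = -((n 1 (s-1):ℤ):ℚ)/((n 1 s:ℤ):ℚ) + E s := by
      simp only [hddef]
      rw [Gs_eq hn0 (by omega) le_rfl]
    have hΔ : ChiZ s k w = ChiZ s k v + (((n 1 s:ℤ):ℚ) - 1)/(2*((n 1 s:ℤ):ℚ)) - v s := by
      unfold ChiZ
      have hw1 : ∑ j ∈ Finset.Icc (1:ℤ) s, w j * ((k j:ℚ) - 2)
          = ∑ j ∈ Finset.Icc (1:ℤ) s, v j * ((k j:ℚ) - 2)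
            + ∑ j ∈ Finset.Icc (1:ℤ) s, d j * ((k j:ℚ) - 2) := by
        rw [← Finset.sum_add_distrib]
        apply Finset.sum_congr rfl
        intro j _
        simp only [hwdef]
        ring
      have hw2 : ∑ j ∈ Finset.Icc (1:ℤ) s, w j * Cz k w j
          = ∑ j ∈ Finset.Icc (1:ℤ) s, v j * Cz k v j
            + (∑ j ∈ Finset.Icc (1:ℤ) s, v j * Cz k d j
              + (∑ j ∈ Finset.Icc (1:ℤ) s, d j * Cz k v j
                + ∑ j ∈ Finset.Icc (1:ℤ) s, d j * Cz k d j)) := by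
        rw [← Finset.sum_add_distrib, ← Finset.sum_add_distrib, ← Finset.sum_add_distrib]
        apply Finset.sum_congr rfl
        intro j _
        have hcw : Cz k w j = Cz k v j + Cz k d j := by
          simp only [Cz, hwdef]
          ring
        rw [hcw]
        simp only [hwdef]
        ring
      rw [hw1, hw2, hA1, hA2, hA3, hA4, hds]
      have hXY : ∑ j ∈ Finset.Icc (i+1) s, Cz k E j
          = -(E s) - E (i+1) - ∑ j ∈ Finset.Icc (i+1) s, ((k j:ℚ) - 2) := by
        linarith [hcancel]
      rw [hXY, ← hEeq]
      ring
    -- final assembly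
    have hsplit2 : ∑ j ∈ Finset.Icc (1:ℤ) (a+1),
          Int.fract (((j * n 1 (s - 1) : ℤ) : ℚ) / ((n 1 s : ℤ) : ℚ))
        = (∑ j ∈ Finset.Icc (1:ℤ) a,
            Int.fract (((j * n 1 (s - 1) : ℤ) : ℚ) / ((n 1 s : ℤ) : ℚ)))
          + Int.fract ((((a+1) * n 1 (s - 1) : ℤ) : ℚ) / ((n 1 s : ℤ) : ℚ)) := by
      have := sum_Icc_top (by omega : (1:ℤ) ≤ a+1)
        (fun j => Int.fract (((j * n 1 (s - 1) : ℤ) : ℚ) / ((n 1 s : ℤ) : ℚ)))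
      rw [show a+1-1 = a by ring] at this
      exact this
    have hfr : Int.fract ((((a+1) * n 1 (s - 1) : ℤ) : ℚ) / ((n 1 s : ℤ) : ℚ))
        = ((((a+1) * n 1 (s-1)) % (n 1 s) : ℤ) : ℚ) / ((n 1 s : ℤ) : ℚ) :=
      fract_div _ _ hp0
    rw [hsplit2, hfr, ← hvs]
    have hfinal : ChiZ s k v = ChiZ s k w - (((n 1 s:ℤ):ℚ) - 1)/(2*((n 1 s:ℤ):ℚ)) + v s := by
      linarith [hΔ]
    rw [hfinal, hχw]
    push_cast
    ring

end Part4

/-- The Riemann–Roch function `χ(y) = -((K, y) + (y, y))/2` extended to `L ⊗ ℚ`,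
where `K(b_j) = -(b_j, b_j) - 2`. -/
noncomputable def chiQ {J : Type*} [Fintype J] (B : J → J → ℤ) (y : J → ℚ) : ℚ :=
  (-(∑ j, y j * (-(B j j : ℚ) - 2)) - ∑ i, ∑ j, y i * (B i j : ℚ) * y j) / 2

/-- for the lens space `L(p,q)` given by the chain plumbing with
`p/q = [k_1,…,k_s]`, and the spin^c structure indexed by `0 ≤ a < p`, one has
`χ(l'_{[-a g_s]}) = a(1-p)/(2p) + ∑_{j=1}^{a} {j q'/p}` where `q' = n_{1,s-1}`
(so `q q' ≡ 1 (mod p)`). -/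
theorem lens_chi_min_rep (s : ℤ) (hs : 1 ≤ s) (k : ℤ → ℤ) (n : ℤ → ℤ → ℤ)
    (hk : ∀ i, 1 ≤ i → i ≤ s → 2 ≤ k i)
    (hn1 : ∀ i, n i (i - 1) = 1)
    (hn0 : ∀ i j, j < i - 1 → n i j = 0)
    (hrec : ∀ i j, i ≤ j → j ≤ s → n i j = k i * n (i + 1) j - n (i + 2) j)
    (B : ↥(Finset.Icc (1 : ℤ) s) → ↥(Finset.Icc (1 : ℤ) s) → ℤ)
    (hB : ∀ i j : ↥(Finset.Icc (1 : ℤ) s), B i j =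
      if (i : ℤ) = (j : ℤ) then -(k (i : ℤ))
      else if (i : ℤ) = (j : ℤ) + 1 ∨ (j : ℤ) = (i : ℤ) + 1 then 1 else 0)
    (gs : ↥(Finset.Icc (1 : ℤ) s) → ℚ)
    (hgs : ∀ j : ↥(Finset.Icc (1 : ℤ) s),
      ∑ i, gs i * (B i j : ℚ) = if (j : ℤ) = s then 1 else 0)
    (a : ℤ) (ha0 : 0 ≤ a) (hap : a < n 1 s)
    (l'k : ↥(Finset.Icc (1 : ℤ) s) → ℚ)
    (hmem : ∃ x : ↥(Finset.Icc (1 : ℤ) s) → ℤ, l'k = fun i => -(a : ℚ) * gs i + x i)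
    (hS : ∀ j, ∑ i, l'k i * (B i j : ℚ) ≤ 0)
    (hmin : ∀ y : ↥(Finset.Icc (1 : ℤ) s) → ℚ,
      (∃ x : ↥(Finset.Icc (1 : ℤ) s) → ℤ, y = fun i => -(a : ℚ) * gs i + x i) →
      (∀ j, ∑ i, y i * (B i j : ℚ) ≤ 0) → ∀ i, l'k i ≤ y i) :
    chiQ B l'k = ((a : ℚ) * (1 - (n 1 s : ℚ))) / (2 * (n 1 s : ℚ)) +
      ∑ j ∈ Finset.Icc (1 : ℤ) a, Int.fract (((j * n 1 (s - 1) : ℤ) : ℚ) / ((n 1 s : ℤ) : ℚ)) := by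
  have hgsG := gs_eq_Gs hs hk hn1 hn0 hrec B hB gs hgs
  have hvvan : Vanish s (ExtQ s l'k) := ExtQ_vanish l'k
  have hvval : ValidP s k (ExtQ s l'k) := by
    intro j h1 h2
    have hj : j ∈ Finset.Icc (1:ℤ) s := Finset.mem_Icc.mpr ⟨h1, h2⟩
    have h := hS ⟨j, hj⟩
    rw [sumB B hB l'k ⟨j, hj⟩] at h
    exact h
  have hvcs : CosetP s n a (ExtQ s l'k) := by
    obtain ⟨x, hx⟩ := hmem
    refine ⟨fun t => if h : t ∈ Finset.Icc (1:ℤ) s then x ⟨t, h⟩ else 0, ?_⟩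
    intro t h1 h2
    have ht : t ∈ Finset.Icc (1:ℤ) s := Finset.mem_Icc.mpr ⟨h1, h2⟩
    unfold ExtQ
    beta_reduce
    rw [dif_pos ht, dif_pos ht, hx]
    beta_reduce
    rw [hgsG ⟨t, ht⟩, Gs_eq hn0 (by omega) h2]
    push_cast
    ring
  have hvmin : ∀ y, Vanish s y → ValidP s k y → CosetP s n a y →
      ∀ t, ExtQ s l'k t ≤ y t := by
    intro y hyvan hyval hycs t
    obtain ⟨zy, hzy⟩ := hycs
    have hmem' : ∃ x : ↥(Finset.Icc (1:ℤ) s) → ℤ,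
        (fun i : ↥(Finset.Icc (1:ℤ) s) => y (i:ℤ)) = fun i => -(a:ℚ) * gs i + x i := by
      refine ⟨fun i => zy (i:ℤ), ?_⟩
      funext i
      have him := Finset.mem_Icc.mp i.2
      rw [hzy (i:ℤ) him.1 him.2, hgsG i, Gs_eq hn0 (by omega) him.2]
      push_cast
      ring
    have hext : ∀ t, ExtQ s (fun i : ↥(Finset.Icc (1:ℤ) s) => y (i:ℤ)) t = y t := by
      intro t
      by_cases ht : t ∈ Finset.Icc (1:ℤ) s
      · unfold ExtQ; rw [dif_pos ht]
      · unfold ExtQ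
        rw [dif_neg ht, hyvan t (by simpa [Finset.mem_Icc] using ht)]
    have hS' : ∀ j : ↥(Finset.Icc (1:ℤ) s),
        ∑ i, (fun i : ↥(Finset.Icc (1:ℤ) s) => y (i:ℤ)) i * (B i j : ℚ) ≤ 0 := by
      intro j
      rw [sumB B hB (fun i => y (i:ℤ)) j, hext, hext, hext]
      have hjm := Finset.mem_Icc.mp j.2
      have := hyval (j:ℤ) hjm.1 hjm.2
      unfold Cz at this
      linarith
    have h := hmin (fun i => y (i:ℤ)) hmem' hS'
    by_cases ht : t ∈ Finset.Icc (1:ℤ) s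
    · have h2 := h ⟨t, ht⟩
      unfold ExtQ
      rw [dif_pos ht]
      exact h2
    · unfold ExtQ
      rw [dif_neg ht, hyvan t (by simpa [Finset.mem_Icc] using ht)]
  have hchi : chiQ B l'k = ChiZ s k (ExtQ s l'k) := by
    unfold chiQ ChiZ
    have h1 : ∑ j : ↥(Finset.Icc (1:ℤ) s), l'k j * (-(B j j : ℚ) - 2)
        = ∑ j ∈ Finset.Icc (1:ℤ) s, ExtQ s l'k j * ((k j:ℚ) - 2) := by
      have e : ∀ j : ↥(Finset.Icc (1:ℤ) s), l'k j * (-(B j j : ℚ) - 2)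
          = (fun t => ExtQ s l'k t * ((k t:ℚ) - 2)) (j:ℤ) := by
        intro j
        beta_reduce
        rw [ExtQ_coe, hB j j, if_pos rfl]
        push_cast
        ring
      rw [Finset.sum_congr rfl (fun j _ => e j),
        Finset.sum_coe_sort (Finset.Icc (1:ℤ) s) (fun t => ExtQ s l'k t * ((k t:ℚ) - 2))]
    have h2 : ∑ i : ↥(Finset.Icc (1:ℤ) s), ∑ j : ↥(Finset.Icc (1:ℤ) s),
          l'k i * (B i j : ℚ) * l'k j
        = ∑ j ∈ Finset.Icc (1:ℤ) s, ExtQ s l'k j * Cz k (ExtQ s l'k) j := by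
      rw [Finset.sum_comm]
      have e : ∀ j : ↥(Finset.Icc (1:ℤ) s),
          ∑ i : ↥(Finset.Icc (1:ℤ) s), l'k i * (B i j:ℚ) * l'k j
            = (fun t => ExtQ s l'k t * Cz k (ExtQ s l'k) t) (j:ℤ) := by
        intro j
        rw [← Finset.sum_mul, sumB B hB l'k j]
        beta_reduce
        unfold Cz
        rw [ExtQ_coe]
        ring
      rw [Finset.sum_congr rfl (fun j _ => e j),
        Finset.sum_coe_sort (Finset.Icc (1:ℤ) s) (fun t => ExtQ s l'k t * Cz k (ExtQ s l'k) t)]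
    rw [h1, h2]
  rw [hchi]
  exact mainz hs hk hn1 hn0 hrec a ha0 (ExtQ s l'k) hvvan hvval hvcs hvmin
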